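/- A set function φ is k-alternating if and only if it is weakly ℓ-alternating for all ℓ with 1 ≤ ℓ ≤ k, where weakly ℓ-alternating means the alternating inequality holds for all pairwise disjoint sets A_0, ..., A_ℓ. -/

import Mathlib

def IsSetAlgebra {J : Type*} (𝓑 : Set (Set J)) : Prop :=
  ∅ ∈ 𝓑 ∧ (∀ X ∈ 𝓑, Xᶜ ∈ 𝓑) ∧ (∀ X ∈ 𝓑, ∀ Y ∈ 𝓑, X ∪ Y ∈ 𝓑)

noncomputable def altSum {J : Type*} (φ : Set J → ℝ) (A₀ : Set J) {k : ℕ}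
    (A : Fin k → Set J) : ℝ :=
  ∑ K : Finset (Fin k), (-1 : ℝ) ^ K.card * φ (A₀ ∪ ⋃ i ∈ K, A i)

def KAlternating {J : Type*} (𝓑 : Set (Set J)) (φ : Set J → ℝ) (k : ℕ) : Prop :=
  φ ∅ = 0 ∧ ∀ A₀ ∈ 𝓑, ∀ A : Fin k → Set J, (∀ i, A i ∈ 𝓑) → altSum φ A₀ A ≤ 0

def WeaklyKAlternating {J : Type*} (𝓑 : Set (Set J)) (φ : Set J → ℝ) (k : ℕ) : Prop :=
  φ ∅ = 0 ∧ ∀ A₀ ∈ 𝓑, ∀ A : Fin k → Set J, (∀ i, A i ∈ 𝓑) →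
    (∀ i, Disjoint A₀ (A i)) → (∀ i j, i ≠ j → Disjoint (A i) (A j)) →
    altSum φ A₀ A ≤ 0

open Finset in
theorem sum_finset_fin_succ {k : ℕ} {M : Type*} [AddCommMonoid M]
    (f : Finset (Fin (k+1)) → M) :
    ∑ K : Finset (Fin (k+1)), f K
      = ∑ K : Finset (Fin k), f (K.map (⟨Fin.succ, Fin.succ_injective k⟩ : Fin k ↪ Fin (k+1)))
        + ∑ K : Finset (Fin k),
            f (insert 0 (K.map (⟨Fin.succ, Fin.succ_injective k⟩ : Fin k ↪ Fin (k+1)))) := by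
  classical
  set emb : Fin k ↪ Fin (k+1) := ⟨Fin.succ, Fin.succ_injective k⟩ with hemb
  have hmem : ∀ (K : Finset (Fin k)) (a : Fin (k+1)), a ∈ K.map emb ↔ ∃ b ∈ K, b.succ = a := by
    intro K a; simp [hemb]
  rw [← Finset.sum_filter_add_sum_filter_not Finset.univ (fun K => (0 : Fin (k+1)) ∉ K) f]
  congr 1
  · refine (Finset.sum_nbij'
      (fun K : Finset (Fin k) => K.map emb)
      (fun K : Finset (Fin (k+1)) => K.preimage Fin.succ (Fin.succ_injective k).injOn)
      ?_ ?_ ?_ ?_ ?_).symm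
    · intro K _
      simp only [mem_filter, mem_univ, true_and]
      intro h
      obtain ⟨b, _, hb⟩ := (hmem K 0).1 h
      exact Fin.succ_ne_zero b hb
    · intro K hK; exact mem_univ _
    · intro K _; exact Finset.preimage_map _ _
    · intro K hK
      simp only [mem_filter, mem_univ, true_and] at hK
      ext a
      rw [hmem]
      simp only [Finset.mem_preimage]
      constructor
      · rintro ⟨b, hb, rfl⟩; exact hb
      · intro ha
        rcases Fin.eq_zero_or_eq_succ a with h | ⟨b, rfl⟩
        · exact absurd (h ▸ ha) hK
        · exact ⟨b, ha, rfl⟩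
    · intro K _; rfl
  · refine (Finset.sum_nbij'
      (fun K : Finset (Fin k) => insert 0 (K.map emb))
      (fun K : Finset (Fin (k+1)) => K.preimage Fin.succ (Fin.succ_injective k).injOn)
      ?_ ?_ ?_ ?_ ?_).symm
    · intro K _
      simp only [mem_filter, mem_univ, true_and, not_not]
      exact Finset.mem_insert_self _ _
    · intro K _; exact mem_univ _
    · intro K _
      ext b
      simp only [Finset.mem_preimage, Finset.mem_insert]
      rw [hmem]
      constructor
      · rintro (h | h)
        · exact absurd h (Fin.succ_ne_zero b)
        · obtain ⟨c, hc, hcb⟩ := h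
          rwa [← emb.injective hcb]
      · intro hb; exact Or.inr ⟨b, hb, rfl⟩
    · intro K hK
      simp only [mem_filter, mem_univ, true_and, not_not] at hK
      ext a
      simp only [Finset.mem_insert]
      rw [hmem]
      simp only [Finset.mem_preimage]
      constructor
      · rintro (rfl | ⟨b, hb, rfl⟩); exacts [hK, hb]
      · intro ha
        rcases Fin.eq_zero_or_eq_succ a with h | ⟨b, rfl⟩
        · exact Or.inl h
        · exact Or.inr ⟨b, ha, rfl⟩
    · intro K _; rfl

/-- elementary difference operator -/
def dOp {J : Type*} (A : Set J) (f : Set J → ℝ) : Set J → ℝ :=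
  fun X => f X - f (X ∪ A)

/-- iterated difference operator along a list -/
def iterD {J : Type*} : List (Set J) → (Set J → ℝ) → Set J → ℝ
  | [], f => f
  | A :: L, f => dOp A (iterD L f)

@[simp] lemma iterD_nil {J : Type*} (f : Set J → ℝ) : iterD [] f = f := rfl

lemma iterD_cons {J : Type*} (A : Set J) (L : List (Set J)) (f : Set J → ℝ) (X : Set J) :
    iterD (A :: L) f X = iterD L f X - iterD L f (X ∪ A) := rfl

lemma iterD_swap {J : Type*} (A B : Set J) (L : List (Set J)) (f : Set J → ℝ) (X : Set J) :
    iterD (A :: B :: L) f X = iterD (B :: A :: L) f X := by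
  simp only [iterD_cons]
  rw [Set.union_right_comm]
  ring

lemma iterD_perm {J : Type*} {L L' : List (Set J)} (h : L.Perm L') (f : Set J → ℝ) :
    iterD L f = iterD L' f := by
  induction h with
  | nil => rfl
  | cons a _ ih => funext X; simp only [iterD_cons]; rw [ih]
  | swap a b l => funext X; exact iterD_swap _ _ _ _ _
  | trans _ _ ih1 ih2 => rw [ih1, ih2]

lemma iterD_dup {J : Type*} (A : Set J) (L : List (Set J)) (f : Set J → ℝ) (X : Set J) :
    iterD (A :: A :: L) f X = iterD (A :: L) f X := by
  simp only [iterD_cons]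
  rw [Set.union_assoc, Set.union_self]
  ring

lemma altSum_eq_iterD {J : Type*} (φ : Set J → ℝ) {k : ℕ} (A : Fin k → Set J) (X : Set J) :
    altSum φ X A = iterD (List.ofFn A) φ X := by
  induction k generalizing X with
  | zero =>
      simp [altSum, iterD]
      norm_num [show (default : Finset (Fin 0)).card = 0 from rfl]
  | succ k ih =>
      rw [List.ofFn_succ, iterD_cons, ← ih, ← ih]
      unfold altSum
      rw [sum_finset_fin_succ (fun K => (-1 : ℝ) ^ K.card * φ (X ∪ ⋃ i ∈ K, A i))]
      have hcard : ∀ K : Finset (Fin k),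
          (K.map (⟨Fin.succ, Fin.succ_injective k⟩ : Fin k ↪ Fin (k+1))).card = K.card :=
        fun K => Finset.card_map _
      have hnotmem : ∀ K : Finset (Fin k),
          (0 : Fin (k+1)) ∉ K.map (⟨Fin.succ, Fin.succ_injective k⟩ : Fin k ↪ Fin (k+1)) := by
        intro K h
        obtain ⟨b, _, hb⟩ := Finset.mem_map.1 h
        exact Fin.succ_ne_zero b hb
      have hU : ∀ K : Finset (Fin k),
          (⋃ i ∈ K.map (⟨Fin.succ, Fin.succ_injective k⟩ : Fin k ↪ Fin (k+1)), A i)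
            = ⋃ j ∈ K, A j.succ := by
        intro K
        ext x
        simp only [Set.mem_iUnion, Finset.mem_map, Function.Embedding.coeFn_mk]
        constructor
        · rintro ⟨i, ⟨b, hb, rfl⟩, hx⟩; exact ⟨b, hb, hx⟩
        · rintro ⟨b, hb, hx⟩; exact ⟨b.succ, ⟨b, hb, rfl⟩, hx⟩
      congr 1
      · apply Finset.sum_congr rfl
        intro K _
        rw [hcard, hU]
      · rw [← Finset.sum_neg_distrib]
        apply Finset.sum_congr rfl
        intro K _
        rw [Finset.card_insert_of_notMem (hnotmem K), hcard]
        rw [Finset.set_biUnion_insert, hU]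
        have : X ∪ (A 0 ∪ ⋃ j ∈ K, A j.succ) = X ∪ A 0 ∪ ⋃ j ∈ K, A j.succ := by
          rw [Set.union_assoc]
        rw [this]
        have : ∀ j : Fin k, A j.succ = (A ∘ Fin.succ) j := fun _ => rfl
        simp only [this]
        ring

section Algebra
variable {J : Type*} {𝓑 : Set (Set J)}

lemma alg_univ (h𝓑 : IsSetAlgebra 𝓑) : Set.univ ∈ 𝓑 := by
  have := h𝓑.2.1 ∅ h𝓑.1; simpa using this

lemma alg_inter (h𝓑 : IsSetAlgebra 𝓑) {X Y : Set J} (hX : X ∈ 𝓑) (hY : Y ∈ 𝓑) : X ∩ Y ∈ 𝓑 := by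
  have : X ∩ Y = (Xᶜ ∪ Yᶜ)ᶜ := by rw [Set.compl_union, compl_compl, compl_compl]
  rw [this]
  exact h𝓑.2.1 _ (h𝓑.2.2 _ (h𝓑.2.1 _ hX) _ (h𝓑.2.1 _ hY))

lemma alg_diff (h𝓑 : IsSetAlgebra 𝓑) {X Y : Set J} (hX : X ∈ 𝓑) (hY : Y ∈ 𝓑) : X \ Y ∈ 𝓑 :=
  alg_inter h𝓑 hX (h𝓑.2.1 _ hY)

lemma alg_biInter (h𝓑 : IsSetAlgebra 𝓑) {ι : Type*} (s : Finset ι) (f : ι → Set J) (hf : ∀ i ∈ s, f i ∈ 𝓑) :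
    (⋂ i ∈ s, f i) ∈ 𝓑 := by
  classical
  induction s using Finset.induction with
  | empty => simpa using alg_univ h𝓑
  | insert _ _ hx ih =>
      rw [Finset.set_biInter_insert]
      exact alg_inter h𝓑 (hf _ (Finset.mem_insert_self _ _))
        (ih fun i hi => hf i (Finset.mem_insert_of_mem hi))

end Algebra

def unionList {J : Type*} : List (Set J) → Set J
  | [] => ∅
  | A :: L => A ∪ unionList L

lemma mem_unionList {J : Type*} {x : J} {L : List (Set J)} :
    x ∈ unionList L ↔ ∃ A ∈ L, x ∈ A := by
  induction L with
  | nil => simp [unionList]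
  | cons A L ih => simp [unionList, ih]

lemma unionList_mem_alg {J : Type*} {𝓑 : Set (Set J)} (h𝓑 : IsSetAlgebra 𝓑)
    {L : List (Set J)} (hL : ∀ A ∈ L, A ∈ 𝓑) : unionList L ∈ 𝓑 := by
  induction L with
  | nil => exact h𝓑.1
  | cons A L ih =>
      exact h𝓑.2.2 _ (hL _ (List.mem_cons_self)) _
        (ih fun B hB => hL B (List.mem_cons_of_mem _ hB))

lemma subset_unionList {J : Type*} {A : Set J} {L : List (Set J)} (h : A ∈ L) :
    A ⊆ unionList L := fun x hx => mem_unionList.2 ⟨A, h, hx⟩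

lemma disjoint_unionList {J : Type*} {P : Set J} {L : List (Set J)}
    (h : ∀ A ∈ L, Disjoint P A) : Disjoint P (unionList L) := by
  rw [Set.disjoint_right]
  intro x hx
  obtain ⟨A, hA, hxA⟩ := mem_unionList.1 hx
  exact fun hP => (h A hA).le_bot ⟨hP, hxA⟩

/-- a weakly alternating function applied to a list of pairwise disjoint sets -/
lemma weakly_list {J : Type*} {𝓑 : Set (Set J)} {φ : Set J → ℝ} {k : ℕ}
    (Hweak : ∀ ℓ : ℕ, 1 ≤ ℓ → ℓ ≤ k → WeaklyKAlternating 𝓑 φ ℓ)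
    {M : List (Set J)} {X : Set J} (hX : X ∈ 𝓑) (hM : ∀ P ∈ M, P ∈ 𝓑)
    (hdisjX : ∀ P ∈ M, Disjoint P X)
    (hpair : M.Pairwise Disjoint)
    (h1 : 1 ≤ M.length) (h2 : M.length ≤ k) :
    iterD M φ X ≤ 0 := by
  have := (Hweak M.length h1 h2).2 X hX M.get
    (fun i => hM _ (M.get_mem _))
    (fun i => (hdisjX _ (M.get_mem _)).symm)
    ?_
  · rwa [altSum_eq_iterD, List.ofFn_get] at this
  · intro i j hij
    rcases lt_or_gt_of_ne hij with h | h
    · exact (List.pairwise_iff_get.1 hpair) i j h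
    · exact ((List.pairwise_iff_get.1 hpair) j i h).symm

lemma pairwise_of_forall {J : Type*} {r : Set J → Set J → Prop} {M : List (Set J)}
    {𝒜 : Set (Set J)} (hM : ∀ P ∈ M, P ∈ 𝒜) (h : ∀ P ∈ 𝒜, ∀ Q ∈ 𝒜, r P Q) :
    M.Pairwise r := by
  induction M with
  | nil => exact List.Pairwise.nil
  | cons A L ih =>
      refine List.Pairwise.cons ?_ (ih fun P hP => hM P (List.mem_cons_of_mem _ hP))
      intro Q hQ
      exact h A (hM A (List.mem_cons_self)) Q (hM Q (List.mem_cons_of_mem _ hQ))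

/-- Lemma C: cleanup for lists of "atoms" (pairwise equal-or-disjoint). -/
lemma cleanup {J : Type*} {𝓑 : Set (Set J)} {φ : Set J → ℝ} {k : ℕ}
    (Hweak : ∀ ℓ : ℕ, 1 ≤ ℓ → ℓ ≤ k → WeaklyKAlternating 𝓑 φ ℓ) :
    ∀ n (M : List (Set J)) (X : Set J), M.length ≤ n → X ∈ 𝓑 → (∀ P ∈ M, P ∈ 𝓑) →
      M.Pairwise (fun P Q => P = Q ∨ Disjoint P Q) →
      (∀ P ∈ M, Disjoint P X ∨ P ⊆ X) →
      1 ≤ M.length → M.length ≤ k → iterD M φ X ≤ 0 := by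
  classical
  intro n
  induction n with
  | zero => intro M X hn _ _ _ _ h1 _; omega
  | succ n ih =>
      intro M X hn hX hM hpair hdX h1 h2
      by_cases habs : ∃ P ∈ M, P ⊆ X
      · obtain ⟨P, hPM, hPX⟩ := habs
        rw [iterD_perm (List.perm_cons_erase hPM) φ, iterD_cons,
          Set.union_eq_self_of_subset_right hPX, sub_self]
      · have hdisj : ∀ P ∈ M, Disjoint P X := by
          intro P hP
          rcases hdX P hP with h | h
          · exact h
          · exact absurd ⟨P, hP, h⟩ habs
        by_cases hnd : M.Nodup
        · refine weakly_list Hweak hX hM hdisj ?_ h1 h2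
          have := List.Pairwise.and hpair hnd
          refine this.imp ?_
          rintro a b ⟨h | h, hne⟩
          · exact absurd h hne
          · exact h
        · obtain ⟨a, ha⟩ := List.exists_duplicate_iff_not_nodup.2 hnd
          have haM : a ∈ M := ha.mem
          have hcount : 2 ≤ M.count a := List.duplicate_iff_two_le_count.1 ha
          have haM' : a ∈ M.erase a := by
            rw [← List.count_pos_iff, List.count_erase_self]
            omega
          have hperm : M.Perm (a :: a :: (M.erase a).erase a) :=
            (List.perm_cons_erase haM).trans
              ((List.perm_cons_erase haM').cons a)
          set N := a :: (M.erase a).erase a with hN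
          have hsub : N.Sublist (a :: a :: (M.erase a).erase a) :=
            (List.sublist_cons_self a _).cons₂ a
          have hmemN : ∀ P ∈ N, P ∈ M := by
            intro P hP
            rcases List.mem_cons.1 hP with rfl | hP
            · exact haM
            · exact List.mem_of_mem_erase (List.mem_of_mem_erase hP)
          have hlen2 : 2 ≤ M.length := le_trans hcount (List.count_le_length)
          have hlen : N.length = M.length - 1 := by
            have e1 : (M.erase a).length = M.length - 1 := List.length_erase_of_mem haM
            have e2 : ((M.erase a).erase a).length = (M.erase a).length - 1 :=
              List.length_erase_of_mem haM'
            have e3 : N.length = ((M.erase a).erase a).length + 1 := List.length_cons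
            omega
          rw [iterD_perm hperm φ, iterD_dup]
          have hpairN : N.Pairwise (fun P Q => P = Q ∨ Disjoint P Q) :=
            ((hperm.pairwise_iff (by
              intro x y h
              rcases h with h | h
              exacts [Or.inl h.symm, Or.inr h.symm])).1 hpair).sublist hsub
          refine ih N X ?_ hX (fun P hP => hM P (hmemN P hP))
            hpairN (fun P hP => Or.inl (hdisj P (hmemN P hP))) ?_ ?_ <;> omega

lemma iterD_replicate {J : Type*} (a : Set J) (rest : List (Set J)) (φ : Set J → ℝ) :
    ∀ n (X : Set J), iterD (List.replicate n a ++ (a :: rest)) φ X = iterD (a :: rest) φ X := by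
  intro n
  induction n with
  | zero => intro X; rfl
  | succ n ih =>
      intro X
      rw [List.replicate_succ, List.cons_append, iterD_cons, ih, ih, ← iterD_cons, iterD_dup]

lemma ofFn_get_list {J : Type*} (L : List (Set J)) {k : ℕ} (h : L.length = k) :
    List.ofFn (fun i : Fin k => L.get (Fin.cast h.symm i)) = L := by
  subst h
  exact List.ofFn_get L

/-- forward direction: `k`-alternating implies weakly `ℓ`-alternating for `1 ≤ ℓ ≤ k`. -/
lemma forward_dir {J : Type*} {𝓑 : Set (Set J)} {φ : Set J → ℝ} {k : ℕ}
    (H : KAlternating 𝓑 φ k) (ℓ : ℕ) (h1 : 1 ≤ ℓ) (h2 : ℓ ≤ k) :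
    WeaklyKAlternating 𝓑 φ ℓ := by
  refine ⟨H.1, ?_⟩
  intro A₀ hA₀ A hA _ _
  obtain ⟨m, rfl⟩ : ∃ m, ℓ = m + 1 := ⟨ℓ - 1, by omega⟩
  set L : List (Set J) := List.replicate (k - (m+1)) (A 0) ++ List.ofFn A with hL
  have hlen : L.length = k := by
    simp only [hL, List.length_append, List.length_replicate, List.length_ofFn]
    omega
  have key : altSum φ A₀ A = iterD L φ A₀ := by
    rw [altSum_eq_iterD, hL, List.ofFn_succ, iterD_replicate]
  rw [key, ← ofFn_get_list L hlen, ← altSum_eq_iterD]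
  refine H.2 A₀ hA₀ _ ?_
  intro i
  have : L.get (Fin.cast hlen.symm i) ∈ L := L.get_mem _
  rcases List.mem_append.1 this with h | h
  · rw [List.eq_of_mem_replicate h]; exact hA 0
  · obtain ⟨j, hj⟩ := List.mem_ofFn.1 h
    rw [← hj]; exact hA j

lemma iterD_union_split {J : Type*} (B C : Set J) (rest : List (Set J)) (φ : Set J → ℝ)
    (X : Set J) :
    iterD ((B ∪ C) :: rest) φ X
      = iterD (B :: rest) φ X + iterD (C :: rest) φ (X ∪ B) := by
  simp only [iterD_cons]
  rw [← Set.union_assoc]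
  ring

lemma expansion {J : Type*} {𝓑 : Set (Set J)} (h𝓑 : IsSetAlgebra 𝓑) {φ : Set J → ℝ} {k : ℕ}
    (Hweak : ∀ ℓ : ℕ, 1 ≤ ℓ → ℓ ≤ k → WeaklyKAlternating 𝓑 φ ℓ)
    (A₀ : Set J) (hA₀ : A₀ ∈ 𝓑) (𝒜 : Set (Set J))
    (H1 : ∀ P ∈ 𝒜, P ∈ 𝓑) (H2 : ∀ P ∈ 𝒜, Disjoint P A₀)
    (H3 : ∀ P ∈ 𝒜, ∀ Q ∈ 𝒜, P = Q ∨ Disjoint P Q) :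
    ∀ (L M R : List (Set J)),
      (∀ A ∈ L, ∃ Q : List (Set J), (∀ P ∈ Q, P ∈ 𝒜) ∧ A = unionList Q) →
      (∀ P ∈ M, P ∈ 𝒜) → (∀ P ∈ R, P ∈ 𝒜) →
      1 ≤ L.length + M.length → L.length + M.length ≤ k →
      iterD (L ++ M) φ (A₀ ∪ unionList R) ≤ 0 := by
  classical
  intro L
  induction L with
  | nil =>
      intro M R _ hM hR h1 h2
      simp only [List.nil_append, List.length_nil, zero_add] at *
      have hX : A₀ ∪ unionList R ∈ 𝓑 :=
        h𝓑.2.2 _ hA₀ _ (unionList_mem_alg h𝓑 fun P hP => H1 P (hR P hP))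
      refine cleanup Hweak M.length M _ le_rfl hX (fun P hP => H1 P (hM P hP)) ?_ ?_ h1 h2
      · exact pairwise_of_forall hM H3
      · intro P hP
        by_cases hex : ∃ Q ∈ R, P = Q
        · obtain ⟨Q, hQR, rfl⟩ := hex
          exact Or.inr ((subset_unionList hQR).trans Set.subset_union_right)
        · refine Or.inl ?_
          rw [Set.disjoint_union_right]
          refine ⟨H2 P (hM P hP), disjoint_unionList ?_⟩
          intro Q hQR
          rcases H3 P (hM P hP) Q (hR Q hQR) with h | h
          · exact absurd ⟨Q, hQR, h⟩ hex
          · exact h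
  | cons A L' ihL =>
      intro M R hL hM hR h1 h2
      obtain ⟨Q, hQ𝒜, rfl⟩ := hL A (List.mem_cons_self)
      have hL' : ∀ B ∈ L', ∃ Q : List (Set J), (∀ P ∈ Q, P ∈ 𝒜) ∧ B = unionList Q :=
        fun B hB => hL B (List.mem_cons_of_mem _ hB)
      have hlen2 : L'.length + 1 + M.length ≤ k := by
        simpa [Nat.add_comm, Nat.add_left_comm] using h2
      clear hL h1 h2
      revert hQ𝒜
      induction Q generalizing R with
      | nil =>
          intro _
          rw [List.cons_append, iterD_cons]
          have : (A₀ ∪ unionList R) ∪ unionList ([] : List (Set J)) = A₀ ∪ unionList R := by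
            simp [unionList]
          rw [this, sub_self]
      | cons P Q' ihQ =>
          intro hQ𝒜
          rw [List.cons_append,
            show unionList (P :: Q') = P ∪ unionList Q' from rfl,
            iterD_union_split]
          have t1 : iterD (P :: (L' ++ M)) φ (A₀ ∪ unionList R) ≤ 0 := by
            rw [iterD_perm List.perm_middle.symm φ]
            refine ihL (P :: M) R hL' ?_ hR ?_ ?_
            · intro P' hP'
              rcases List.mem_cons.1 hP' with rfl | h
              · exact hQ𝒜 P' (List.mem_cons_self)
              · exact hM _ h
            · simp only [List.length_cons]
              omega
            · simp only [List.length_cons]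
              omega
          have t2 : iterD (unionList Q' :: (L' ++ M)) φ ((A₀ ∪ unionList R) ∪ P) ≤ 0 := by
            have hbase : (A₀ ∪ unionList R) ∪ P = A₀ ∪ unionList (P :: R) := by
              rw [show unionList (P :: R) = P ∪ unionList R from rfl]
              rw [Set.union_assoc, Set.union_comm (unionList R) P]
            rw [hbase, ← List.cons_append]
            refine ihQ (P :: R) ?_ (fun P' h => hQ𝒜 _ (List.mem_cons_of_mem _ h))
            intro P' hP'
            rcases List.mem_cons.1 hP' with rfl | h
            · exact hQ𝒜 P' (List.mem_cons_self)
            · exact hR _ h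
          linarith

lemma iterD_diff {J : Type*} (φ : Set J → ℝ) (Y : Set J) :
    ∀ (L : List (Set J)) (X : Set J), Y ⊆ X →
      iterD (L.map (· \ Y)) φ X = iterD L φ X := by
  intro L
  induction L with
  | nil => intro X _; rfl
  | cons A L ih =>
      intro X hYX
      rw [List.map_cons, iterD_cons, iterD_cons]
      have hU : X ∪ (A \ Y) = X ∪ A := by
        apply Set.Subset.antisymm
        · exact Set.union_subset Set.subset_union_left
            (Set.diff_subset.trans Set.subset_union_right)
        · intro x hx
          rcases hx with hx | hx
          · exact Or.inl hx
          · by_cases hxY : x ∈ Y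
            · exact Or.inl (hYX hxY)
            · exact Or.inr ⟨hx, hxY⟩
      rw [hU, ih X hYX, ih (X ∪ A) (hYX.trans Set.subset_union_left)]

lemma reverse_dir {J : Type*} {𝓑 : Set (Set J)} (h𝓑 : IsSetAlgebra 𝓑) {φ : Set J → ℝ}
    {k : ℕ} (hk : 1 ≤ k)
    (H : ∀ ℓ : ℕ, 1 ≤ ℓ → ℓ ≤ k → WeaklyKAlternating 𝓑 φ ℓ) : KAlternating 𝓑 φ k := by
  classical
  refine ⟨(H 1 le_rfl hk).1, ?_⟩
  intro A₀ hA₀ A hA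
  set B : Fin k → Set J := fun i => A i \ A₀ with hB
  have hB𝓑 : ∀ i, B i ∈ 𝓑 := fun i => alg_diff h𝓑 (hA i) hA₀
  have key : altSum φ A₀ A = iterD (List.ofFn B) φ A₀ := by
    rw [altSum_eq_iterD, ← iterD_diff φ A₀ (List.ofFn A) A₀ subset_rfl, List.map_ofFn]
    rfl
  rw [key]
  set atom : Finset (Fin k) → Set J := fun s => {x | ∀ i, x ∈ B i ↔ i ∈ s} with hatom
  set 𝒜 : Set (Set J) := {P | ∃ s : Finset (Fin k), s.Nonempty ∧ P = atom s} with h𝒜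
  have hatom𝓑 : ∀ s : Finset (Fin k), atom s ∈ 𝓑 := by
    intro s
    have : atom s = (⋂ i ∈ s, B i) ∩ (⋂ i ∈ sᶜ, (B i)ᶜ) := by
      ext x
      simp only [hatom, Set.mem_setOf_eq, Set.mem_inter_iff, Set.mem_iInter,
        Finset.mem_compl, Set.mem_compl_iff]
      constructor
      · intro h
        exact ⟨fun i hi => (h i).2 hi, fun i hi hxi => hi ((h i).1 hxi)⟩
      · rintro ⟨h1, h2⟩ i
        constructor
        · intro hxi
          by_contra his
          exact h2 i his hxi
        · exact h1 i
    rw [this]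
    exact alg_inter h𝓑 (alg_biInter h𝓑 _ _ fun i _ => hB𝓑 i)
      (alg_biInter h𝓑 _ _ fun i _ => h𝓑.2.1 _ (hB𝓑 i))
  have H1 : ∀ P ∈ 𝒜, P ∈ 𝓑 := by
    rintro P ⟨s, _, rfl⟩; exact hatom𝓑 s
  have H2 : ∀ P ∈ 𝒜, Disjoint P A₀ := by
    rintro P ⟨s, ⟨i, hi⟩, rfl⟩
    rw [Set.disjoint_left]
    intro x hx hxA₀
    have : x ∈ B i := (hx i).2 hi
    exact this.2 hxA₀
  have H3 : ∀ P ∈ 𝒜, ∀ Q ∈ 𝒜, P = Q ∨ Disjoint P Q := by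
    rintro P ⟨s, _, rfl⟩ Q ⟨t, _, rfl⟩
    by_cases hst : s = t
    · exact Or.inl (by rw [hst])
    · refine Or.inr ?_
      rw [Set.disjoint_left]
      intro x hxs hxt
      exact hst (Finset.ext fun i => by rw [← hxs i, hxt i])
  have hdecomp : ∀ i : Fin k, ∃ Q : List (Set J), (∀ P ∈ Q, P ∈ 𝒜) ∧ B i = unionList Q := by
    intro i
    refine ⟨((Finset.univ.filter fun s : Finset (Fin k) => i ∈ s).toList).map atom, ?_, ?_⟩
    · intro P hP
      obtain ⟨s, hs, rfl⟩ := List.mem_map.1 hP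
      rw [Finset.mem_toList, Finset.mem_filter] at hs
      exact ⟨s, ⟨i, hs.2⟩, rfl⟩
    · ext x
      rw [mem_unionList]
      constructor
      · intro hx
        refine ⟨atom (Finset.univ.filter fun j => x ∈ B j), ?_, ?_⟩
        · refine List.mem_map.2 ⟨_, ?_, rfl⟩
          rw [Finset.mem_toList, Finset.mem_filter]
          exact ⟨Finset.mem_univ _, Finset.mem_filter.2 ⟨Finset.mem_univ _, hx⟩⟩
        · intro j; simp
      · rintro ⟨P, hP, hxP⟩
        obtain ⟨s, hs, rfl⟩ := List.mem_map.1 hP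
        rw [Finset.mem_toList, Finset.mem_filter] at hs
        exact (hxP i).2 hs.2
  have main := expansion h𝓑 H A₀ hA₀ 𝒜 H1 H2 H3 (List.ofFn B) [] []
    (by
      intro A' hA'
      obtain ⟨j, hj⟩ := List.mem_ofFn.1 hA'
      obtain ⟨Q, hQ⟩ := hdecomp j
      exact ⟨Q, hQ.1, hj ▸ hQ.2⟩)
    (by intro P hP; simp at hP)
    (by intro P hP; simp at hP)
    (by simp; omega) (by simp)
  simpa [unionList] using main


/-- `φ` is `k`-alternating iff it is weakly `ℓ`-alternating for all `1 ≤ ℓ ≤ k`. -/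
theorem stmt7 {J : Type*} (𝓑 : Set (Set J)) (h𝓑 : IsSetAlgebra 𝓑)
    (φ : Set J → ℝ) (k : ℕ) (hk : 1 ≤ k) :
    KAlternating 𝓑 φ k ↔
      ∀ ℓ : ℕ, 1 ≤ ℓ → ℓ ≤ k → WeaklyKAlternating 𝓑 φ ℓ := by
  constructor
  · exact fun h ℓ h1 h2 => forward_dir h ℓ h1 h2
  · exact fun H => reverse_dir h𝓑 hk H
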